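/- (Proposition 1) With the above polar decomposition data, the following hold: S is an isometry, i.e. S^* S = 1; the series ∑_{n=1}^∞ q^{n−1} S^n S^{*n} converges in operator norm and its sum equals a a^*; and a = (∑_{n=1}^∞ q^{n−1} S^n S^{*n})^{1/2} S, where the square root is the nonnegative square root of the nonnegative operator ∑_{n=1}^∞ q^{n−1} S^n S^{*n}. -/

import Mathlib

open ContinuousLinearMap in
private lemma innerAA {H : Type*} [NormedAddCommGroup H] [InnerProductSpace ℂ H]
    [CompleteSpace H] (A : H →L[ℂ] H) (x : H) :
    (inner ℂ ((star A * A) x) x : ℂ) = (‖A x‖ : ℂ) ^ 2 := by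
  rw [ContinuousLinearMap.mul_apply, star_eq_adjoint, adjoint_inner_left, inner_self_eq_norm_sq_to_K]
  norm_num

set_option synthInstance.maxHeartbeats 1000000 in
set_option maxHeartbeats 1000000 in
/-- **Proposition 1.** Let `H` be a complex Hilbert space, `q ∈ (-1,1)`,
and `a` a bounded operator on `H` with `a* a = 1 + q a a*`. Let `C = (a a*)^{1/2}` and let
`S` be a partial isometry with `a* = S* C` and `ker S* = ker a*` (polar decomposition).
Then `S` is an isometry (`S* S = 1`), the series `∑_{n=1}^∞ q^{n-1} Sⁿ S*ⁿ` converges in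
operator norm with sum `a a*`, and `a = (∑_{n=1}^∞ q^{n-1} Sⁿ S*ⁿ)^{1/2} S`. -/
theorem polar_isometry_of_qCCR {H : Type*} [NormedAddCommGroup H]
    [InnerProductSpace ℂ H] [CompleteSpace H]
    {q : ℝ} (hq₁ : -1 < q) (hq₂ : q < 1) (a S : H →L[ℂ] H)
    (hccr : star a * a = 1 + q • (a * star a))
    (hSpi : S * star S * S = S)
    (hpolar : star a = star S * CFC.sqrt (a * star a))
    (hker : LinearMap.ker ((star S : H →L[ℂ] H) : H →ₗ[ℂ] H) =
      LinearMap.ker ((star a : H →L[ℂ] H) : H →ₗ[ℂ] H)) :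
    star S * S = 1 ∧
    HasSum (fun n : ℕ => q ^ n • (S ^ (n + 1) * (star S) ^ (n + 1))) (a * star a) ∧
    a = CFC.sqrt (a * star a) * S := by
  set T := a * star a with hTdef
  have hT0 : (0 : H →L[ℂ] H) ≤ T := mul_star_self_nonneg a
  set C := CFC.sqrt T with hCdef
  have hC0 : (0 : H →L[ℂ] H) ≤ C := CFC.sqrt_nonneg T
  have hCsa : IsSelfAdjoint C := .of_nonneg hC0
  have hC2 : C * C = T := by have := CFC.sq_sqrt T hT0; rwa [sq] at this
  have ha : a = C * S := by
    conv_lhs => rw [← star_star a, hpolar]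
    rw [star_mul, star_star, hCsa.star_eq]
  -- pointwise norm identity
  have key : ∀ x : H, ‖a x‖ ^ 2 = ‖x‖ ^ 2 + q * ‖(star a) x‖ ^ 2 := by
    intro x
    have h1 : (inner ℂ ((star a * a) x) x : ℂ) = (‖a x‖ : ℂ) ^ 2 := innerAA a x
    have h2 : (inner ℂ (T x) x : ℂ) = (‖(star a) x‖ : ℂ) ^ 2 := by
      have := innerAA (star a) x
      rwa [star_star, ← hTdef] at this
    rw [hccr] at h1
    have h3 : ((1 : H →L[ℂ] H) + q • T) x = x + (q : ℂ) • (T x) := by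
      simp [ContinuousLinearMap.add_apply, ContinuousLinearMap.smul_apply]
    rw [h3, inner_add_left, inner_smul_left, inner_self_eq_norm_sq_to_K, h2,
      Complex.conj_ofReal] at h1
    have h4 : ((‖a x‖ ^ 2 : ℝ) : ℂ) = ((‖x‖ ^ 2 + q * ‖(star a) x‖ ^ 2 : ℝ) : ℂ) := by
      push_cast
      exact h1.symm
    exact_mod_cast h4
  -- a is injective
  have hainj : ∀ x : H, a x = 0 → x = 0 := by
    intro x hx
    have hk := key x
    rw [hx, norm_zero] at hk
    have hx2 : ‖x‖ ^ 2 ≤ 0 := by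
      rcases le_or_gt 0 q with hq | hq
      · nlinarith [sq_nonneg ‖(star a) x‖]
      · -- q < 0 : first show ‖a‖ ≤ 1
        have hna : ‖a‖ ≤ 1 := by
          refine ContinuousLinearMap.opNorm_le_bound a zero_le_one fun y => ?_
          have hky := key y
          have h1 : ‖a y‖ ^ 2 ≤ ‖y‖ ^ 2 := by nlinarith [sq_nonneg ‖(star a) y‖]
          nlinarith [norm_nonneg (a y), norm_nonneg y]
        have hsx : ‖(star a) x‖ ≤ ‖x‖ := by
          calc ‖(star a) x‖ ≤ ‖star a‖ * ‖x‖ := (star a).le_opNorm x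
            _ ≤ 1 * ‖x‖ := by
                have : ‖star a‖ ≤ 1 := by rwa [norm_star]
                exact mul_le_mul_of_nonneg_right this (norm_nonneg x)
            _ = ‖x‖ := one_mul _
        have hsq : ‖(star a) x‖ ^ 2 ≤ ‖x‖ ^ 2 :=
          pow_le_pow_left₀ (norm_nonneg _) hsx 2
        nlinarith
    have : ‖x‖ ^ 2 = 0 := le_antisymm hx2 (sq_nonneg _)
    have : ‖x‖ = 0 := by
      exact pow_eq_zero_iff (n := 2) (by norm_num) |>.mp this
    exact norm_eq_zero.mp this
  -- S* S = 1
  have hS1 : star S * S = 1 := by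
    have hp : (star S * S) * (star S * S) = star S * S := by
      calc (star S * S) * (star S * S) = star S * (S * star S * S) := by
            simp [mul_assoc]
        _ = star S * S := by rw [hSpi]
    have hpinj : ∀ x : H, (star S * S) x = 0 → x = 0 := by
      intro x hx
      have hSx : S x = 0 := by
        have h := innerAA S x
        rw [hx, inner_zero_left] at h
        have h0 : (‖S x‖ : ℂ) ^ 2 = 0 := h.symm
        have : (‖S x‖ : ℂ) = 0 := pow_eq_zero_iff (n := 2) (by norm_num) |>.mp h0
        have : ‖S x‖ = 0 := by exact_mod_cast this
        exact norm_eq_zero.mp this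
      have : a x = 0 := by rw [ha]; simp [ContinuousLinearMap.mul_apply, hSx]
      exact hainj x this
    ext x
    have h2 : (star S * S) ((star S * S) x - x) = 0 := by
      rw [map_sub, ← ContinuousLinearMap.mul_apply (star S * S) (star S * S), hp, sub_self]
    have := hpinj _ h2
    have h3 : (star S * S) x = x := by rwa [sub_eq_zero] at this
    simpa using h3
  -- ‖S‖ ≤ 1
  have hSnorm : ‖S‖ ≤ 1 := by
    refine ContinuousLinearMap.opNorm_le_bound S zero_le_one fun y => ?_
    have h := innerAA S y
    rw [hS1, ContinuousLinearMap.one_apply, inner_self_eq_norm_sq_to_K] at h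
    have h' : ‖S y‖ ^ 2 = ‖y‖ ^ 2 := by
      have h4 : ((‖S y‖ ^ 2 : ℝ) : ℂ) = ((‖y‖ ^ 2 : ℝ) : ℂ) := by push_cast; exact h.symm
      exact_mod_cast h4
    nlinarith [norm_nonneg (S y), norm_nonneg y]
  have hpow1 : ∀ (A : H →L[ℂ] H), ‖A‖ ≤ 1 → ∀ n : ℕ, ‖A ^ n‖ ≤ 1 := by
    intro A hA n
    induction n with
    | zero => rw [pow_zero]; exact ContinuousLinearMap.norm_id_le
    | succ n ih =>
      calc ‖A ^ (n + 1)‖ = ‖A ^ n * A‖ := by rw [pow_succ]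
        _ ≤ ‖A ^ n‖ * ‖A‖ := norm_mul_le _ _
        _ ≤ 1 * 1 := mul_le_mul ih hA (norm_nonneg A) zero_le_one
        _ = 1 := mul_one 1
  have hstarSnorm : ‖star S‖ ≤ 1 := by rwa [norm_star]
  -- ker a* ⊆ ker C
  have hkerC : ∀ y : H, (star a) y = 0 → C y = 0 := by
    intro y hy
    have h := innerAA C y
    rw [hCsa.star_eq, hC2] at h
    have h2 : (inner ℂ (T y) y : ℂ) = (‖(star a) y‖ : ℂ) ^ 2 := by
      have := innerAA (star a) y
      rwa [star_star, ← hTdef] at this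
    rw [h2, hy, norm_zero] at h
    have h0 : (‖C y‖ : ℂ) ^ 2 = 0 := by rw [← h]; norm_num
    have : (‖C y‖ : ℂ) = 0 := pow_eq_zero_iff (n := 2) (by norm_num) |>.mp h0
    have : ‖C y‖ = 0 := by exact_mod_cast this
    exact norm_eq_zero.mp this
  -- S S* C = C
  have hCSS : C * (S * star S) = C := by
    ext x
    have hy : (star S) ((S * star S) x - x) = 0 := by
      have h4 : (star S) ((S * star S) x) = ((star S * S) * star S) x := by
        simp [ContinuousLinearMap.mul_apply]
      rw [map_sub, h4, hS1, one_mul, sub_self]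
    have hy2 : (star a) ((S * star S) x - x) = 0 := by
      have hmem : (S * star S) x - x ∈ LinearMap.ker ((star S : H →L[ℂ] H) : H →ₗ[ℂ] H) := hy
      rw [hker] at hmem
      exact hmem
    have := hkerC _ hy2
    rw [map_sub, sub_eq_zero] at this
    simpa [ContinuousLinearMap.mul_apply] using this
  have hSSC : (S * star S) * C = C := by
    have := congrArg star hCSS
    rwa [star_mul, star_mul, star_star, hCsa.star_eq] at this
  -- recursion T = S S* + q • (S T S*)
  have hSa : S * star a = C := by rw [hpolar, ← mul_assoc, hSSC]
  have haS : a * star S = C := by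
    have := congrArg star hSa
    rwa [star_mul, star_star, hCsa.star_eq] at this
  have hrec : T = S * star S + q • (S * T * star S) := by
    calc T = C * C := hC2.symm
      _ = (S * star a) * (a * star S) := by rw [hSa, haS]
      _ = S * (star a * a) * star S := by simp only [mul_assoc]
      _ = S * (1 + q • T) * star S := by rw [hccr]
      _ = S * star S + q • (S * T * star S) := by
          simp only [mul_add, add_mul, mul_one, mul_smul_comm, smul_mul_assoc]
  -- partial sums
  have hpartial : ∀ n : ℕ, T = (∑ k ∈ Finset.range n, q ^ k • (S ^ (k + 1) * (star S) ^ (k + 1)))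
      + q ^ n • (S ^ n * T * (star S) ^ n) := by
    intro n
    induction n with
    | zero => simp
    | succ n ih =>
      have hmid : S ^ n * T * (star S) ^ n
          = S ^ n * (S * star S) * (star S) ^ n
            + q • (S ^ n * (S * T * star S) * (star S) ^ n) := by
        conv_lhs => rw [hrec]
        simp only [mul_add, add_mul, mul_smul_comm, smul_mul_assoc]
      have h1 : S ^ n * (S * star S) * (star S) ^ n = S ^ (n + 1) * (star S) ^ (n + 1) := by
        rw [pow_succ, pow_succ']
        simp only [mul_assoc]
      have h2 : S ^ n * (S * T * star S) * (star S) ^ n = S ^ (n + 1) * T * (star S) ^ (n + 1) := by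
        rw [pow_succ, pow_succ']
        simp only [mul_assoc]
      rw [Finset.sum_range_succ]
      calc T = (∑ k ∈ Finset.range n, q ^ k • (S ^ (k + 1) * (star S) ^ (k + 1)))
            + q ^ n • (S ^ n * T * (star S) ^ n) := ih
        _ = _ := by
            rw [hmid, h1, h2, smul_add, smul_smul, ← pow_succ, add_assoc]
  -- summability
  have hq' : |q| < 1 := abs_lt.mpr ⟨hq₁, hq₂⟩
  have hfbound : ∀ n : ℕ, ‖q ^ n • (S ^ (n + 1) * (star S) ^ (n + 1))‖ ≤ |q| ^ n := by
    intro n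
    have h1 : ‖S ^ (n + 1) * (star S) ^ (n + 1)‖ ≤ 1 := by
      calc ‖S ^ (n + 1) * (star S) ^ (n + 1)‖
          ≤ ‖S ^ (n + 1)‖ * ‖(star S) ^ (n + 1)‖ := norm_mul_le _ _
        _ ≤ 1 * 1 := mul_le_mul (hpow1 S hSnorm _) (hpow1 (star S) hstarSnorm _)
            (norm_nonneg _) zero_le_one
        _ = 1 := mul_one 1
    calc ‖q ^ n • (S ^ (n + 1) * (star S) ^ (n + 1))‖
        = |q| ^ n * ‖S ^ (n + 1) * (star S) ^ (n + 1)‖ := by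
          rw [norm_smul, Real.norm_eq_abs, abs_pow]
      _ ≤ |q| ^ n * 1 := by
          exact mul_le_mul_of_nonneg_left h1 (by positivity)
      _ = |q| ^ n := mul_one _
  have hsummable : Summable (fun n : ℕ => q ^ n • (S ^ (n + 1) * (star S) ^ (n + 1))) :=
    Summable.of_norm_bounded (summable_geometric_of_lt_one (abs_nonneg q) hq') hfbound
  -- partial sums tend to T
  have htendsto : Filter.Tendsto
      (fun n => ∑ k ∈ Finset.range n, q ^ k • (S ^ (k + 1) * (star S) ^ (k + 1)))
      Filter.atTop (nhds T) := by
    rw [← tendsto_sub_nhds_zero_iff]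
    have hb : ∀ n : ℕ,
        ‖(∑ k ∈ Finset.range n, q ^ k • (S ^ (k + 1) * (star S) ^ (k + 1))) - T‖
          ≤ |q| ^ n * ‖T‖ := by
      intro n
      have heq : (∑ k ∈ Finset.range n, q ^ k • (S ^ (k + 1) * (star S) ^ (k + 1))) - T
          = -(q ^ n • (S ^ n * T * (star S) ^ n)) := by
        conv_lhs => rw [hpartial n]
        abel
      rw [heq, norm_neg, norm_smul, Real.norm_eq_abs, abs_pow]
      have hrem : ‖S ^ n * T * (star S) ^ n‖ ≤ ‖T‖ := by
        calc ‖S ^ n * T * (star S) ^ n‖ ≤ ‖S ^ n * T‖ * ‖(star S) ^ n‖ := norm_mul_le _ _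
          _ ≤ (‖S ^ n‖ * ‖T‖) * ‖(star S) ^ n‖ :=
              mul_le_mul_of_nonneg_right (norm_mul_le _ _) (norm_nonneg _)
          _ ≤ (1 * ‖T‖) * 1 := by
              have hq1 := hpow1 S hSnorm n
              have hq2 := hpow1 (star S) hstarSnorm n
              have h3 : ‖S ^ n‖ * ‖T‖ ≤ 1 * ‖T‖ :=
                mul_le_mul_of_nonneg_right hq1 (norm_nonneg _)
              exact mul_le_mul h3 hq2 (norm_nonneg _) (by positivity)
          _ = ‖T‖ := by ring
      exact mul_le_mul_of_nonneg_left hrem (by positivity)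
    have hlim : Filter.Tendsto (fun n : ℕ => |q| ^ n * ‖T‖) Filter.atTop (nhds 0) := by
      have := tendsto_pow_atTop_nhds_zero_of_lt_one (abs_nonneg q) hq'
      simpa using this.mul_const ‖T‖
    exact squeeze_zero_norm hb hlim
  have hHasSum : HasSum (fun n : ℕ => q ^ n • (S ^ (n + 1) * (star S) ^ (n + 1))) T := by
    have h1 := hsummable.hasSum
    have h2 := h1.tendsto_sum_nat
    have h3 : ∑' n : ℕ, q ^ n • (S ^ (n + 1) * (star S) ^ (n + 1)) = T :=
      tendsto_nhds_unique h2 htendsto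
    rwa [h3] at h1
  exact ⟨hS1, hHasSum, ha⟩
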